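/- Fix s > 0. For every integer n ≥ 3 and every triple (α₁, α₂, α₃) ∈ [0,1]³ there exists a still state κ of the hexagonal array of side n whose concentrations α*_r = (number of long edges parallel to direction r)/(3n² − 5n + 2), r = 1, 2, 3, satisfy |α_r − α*_r| < 1/n for each r ∈ {1,2,3}. -/

import Mathlib

open scoped Classical

/-- The hexagonal array of side `n`: nodes `(i,j) ∈ ℤ²` with `|i| ≤ n-1`, `|j| ≤ n-1`,
`|i+j| ≤ n-1`. -/
noncomputable def hexNodes (n : ℤ) : Finset (ℤ × ℤ) :=
  (Finset.Icc ((-(n-1), -(n-1)) : ℤ × ℤ) ((n-1, n-1) : ℤ × ℤ)).filter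
    (fun p => |p.1 + p.2| ≤ n - 1)

/-- The three lattice directions `(1,0)`, `(0,1)`, `(-1,1)`. -/
def hexDirs : Finset (ℤ × ℤ) := {(1,0), (0,1), (-1,1)}

/-- The edges of the hexagonal array of side `n`: unordered pairs `{p, p+d}` with both
endpoints in `hexNodes n` and `d` one of the three lattice directions. -/
noncomputable def hexEdges (n : ℤ) : Finset (Sym2 (ℤ × ℤ)) :=
  (((hexNodes n) ×ˢ hexDirs).filter (fun pd => pd.1 + pd.2 ∈ hexNodes n)).image
    (fun pd => s(pd.1, pd.1 + pd.2))

/-- Interior nodes: all six neighbors lie in the array. -/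
noncomputable def interiorNodes (n : ℤ) : Finset (ℤ × ℤ) :=
  (hexNodes n).filter (fun p => ∀ d ∈ hexDirs, p + d ∈ hexNodes n ∧ p - d ∈ hexNodes n)

/-- The hexagonal equation for `κ` at a node `p`: the sum of `κ` over the six spoke edges of
`p` equals the sum of `κ` over the six rim edges around `p`. -/
def hexEq (κ : Sym2 (ℤ × ℤ) → ℝ) (p : ℤ × ℤ) : Prop :=
  κ s(p, p + (1,0)) + κ s(p, p - (1,0)) + κ s(p, p + (0,1)) + κ s(p, p - (0,1)) +
    κ s(p, p + (-1,1)) + κ s(p, p - (-1,1)) =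
  κ s(p + (1,0), p + (0,1)) + κ s(p + (0,1), p + (-1,1)) + κ s(p + (-1,1), p - (1,0)) +
    κ s(p - (1,0), p - (0,1)) + κ s(p - (0,1), p + (1,-1)) + κ s(p + (1,-1), p + (1,0))

/-- The three lattice direction vectors, indexed by `Fin 3`. -/
def dvec : Fin 3 → ℤ × ℤ := ![(1,0), (0,1), (-1,1)]

/-- An edge is parallel to direction `r` if it has the form `{p, p + dvec r}`. -/
def parallelTo (r : Fin 3) (e : Sym2 (ℤ × ℤ)) : Prop := ∃ p : ℤ × ℤ, e = s(p, p + dvec r)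

/-- A still state with critical elongation `σ`: every edge elongation is `0` or `σ` and the
hexagonal equation holds at every interior node. -/
def StillState (n : ℤ) (σ : ℝ) (κ : Sym2 (ℤ × ℤ) → ℝ) : Prop :=
  (∀ e ∈ hexEdges n, κ e = 0 ∨ κ e = σ) ∧ ∀ p ∈ interiorNodes n, hexEq κ p

-- membership lemma
lemma mem_hexNodes {n : ℤ} {p : ℤ × ℤ} :
    p ∈ hexNodes n ↔ |p.1| ≤ n - 1 ∧ |p.2| ≤ n - 1 ∧ |p.1 + p.2| ≤ n - 1 := by
  simp [hexNodes, Finset.mem_filter, Finset.mem_Icc, Prod.le_def, abs_le, and_assoc]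
  simp only [abs_lt]; constructor <;> intro h <;> omega

/-- parameter of an edge of direction r with base p -/
def eparam : Fin 3 → ℤ × ℤ → ℤ := ![fun p => p.1, fun p => p.1 + p.2, fun p => p.2]

lemma dvec_add_dvec_ne (r r' : Fin 3) : dvec r + dvec r' ≠ 0 := by
  fin_cases r <;> fin_cases r' <;> simp [dvec, Prod.ext_iff] <;> decide

lemma dvec_injective : Function.Injective dvec := by
  intro r r'
  fin_cases r <;> fin_cases r' <;> simp [dvec, Prod.ext_iff] <;> decide

/-- long edge predicate, symmetric -/
def longPred (θ : Fin 3 → ℤ) (p q : ℤ × ℤ) : Prop :=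
  ∃ r : Fin 3, (q = p + dvec r ∧ eparam r p < θ r) ∨ (p = q + dvec r ∧ eparam r q < θ r)

lemma longPred_symm (θ : Fin 3 → ℤ) (p q : ℤ × ℤ) : longPred θ p q = longPred θ q p := by
  unfold longPred
  refine propext ⟨fun ⟨r, h⟩ => ⟨r, h.symm⟩, fun ⟨r, h⟩ => ⟨r, h.symm⟩⟩

noncomputable def kap (σ : ℝ) (θ : Fin 3 → ℤ) : Sym2 (ℤ × ℤ) → ℝ :=
  fun e => if Sym2.lift ⟨fun p q => longPred θ p q, longPred_symm θ⟩ e then σ else 0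

lemma kap_eval (σ : ℝ) (θ : Fin 3 → ℤ) (r : Fin 3) (a : ℤ × ℤ) :
    kap σ θ s(a, a + dvec r) = if eparam r a < θ r then σ else 0 := by
  unfold kap
  rw [Sym2.lift_mk]
  congr 1
  refine propext ⟨?_, fun h => ⟨r, Or.inl ⟨rfl, h⟩⟩⟩
  rintro ⟨r', hr' | hr'⟩
  · have hd : dvec r = dvec r' := by
      have h := hr'.1
      exact add_left_cancel h
    obtain rfl := dvec_injective hd
    exact hr'.2
  · exfalso
    have h := hr'.1
    have : dvec r + dvec r' = 0 := by
      have : a + (dvec r + dvec r') = a + 0 := by rw [add_zero]; rw [← add_assoc]; exact h.symm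
      exact add_left_cancel this
    exact dvec_add_dvec_ne r r' this

section evals
variable (σ : ℝ) (θ : Fin 3 → ℤ)

lemma kA1 (x y : ℤ) : kap σ θ s((x,y),(x+1,y)) = if x < θ 0 then σ else 0 := by
  rw [show ((x+1,y) : ℤ×ℤ) = (x,y) + dvec 0 from by simp [dvec, Prod.ext_iff] <;> omega, kap_eval]
  simp [eparam]

lemma kA2 (x y : ℤ) : kap σ θ s((x,y),(x-1,y)) = if x - 1 < θ 0 then σ else 0 := by
  rw [Sym2.eq_swap, show ((x,y) : ℤ×ℤ) = (x-1,y) + dvec 0 from by simp [dvec, Prod.ext_iff] <;> omega, kap_eval]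
  simp [eparam]

lemma kA3 (x y : ℤ) : kap σ θ s((x,y),(x,y+1)) = if x + y < θ 1 then σ else 0 := by
  rw [show ((x,y+1) : ℤ×ℤ) = (x,y) + dvec 1 from by simp [dvec, Prod.ext_iff] <;> omega, kap_eval]
  simp [eparam]

lemma kA4 (x y : ℤ) : kap σ θ s((x,y),(x,y-1)) = if x + y - 1 < θ 1 then σ else 0 := by
  rw [Sym2.eq_swap, show ((x,y) : ℤ×ℤ) = (x,y-1) + dvec 1 from by simp [dvec, Prod.ext_iff] <;> omega, kap_eval]
  simp [eparam]
  exact if_congr (by omega) rfl rfl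

lemma kA5 (x y : ℤ) : kap σ θ s((x,y),(x-1,y+1)) = if y < θ 2 then σ else 0 := by
  rw [show ((x-1,y+1) : ℤ×ℤ) = (x,y) + dvec 2 from by simp [dvec, Prod.ext_iff] <;> omega, kap_eval]
  simp [eparam]

lemma kA6 (x y : ℤ) : kap σ θ s((x,y),(x+1,y-1)) = if y - 1 < θ 2 then σ else 0 := by
  rw [Sym2.eq_swap, show ((x,y) : ℤ×ℤ) = (x+1,y-1) + dvec 2 from by simp [dvec, Prod.ext_iff] <;> omega, kap_eval]
  simp [eparam]

lemma kB1 (x y : ℤ) : kap σ θ s((x+1,y),(x,y+1)) = if y < θ 2 then σ else 0 := by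
  rw [show ((x,y+1) : ℤ×ℤ) = (x+1,y) + dvec 2 from by simp [dvec, Prod.ext_iff] <;> omega, kap_eval]
  simp [eparam]

lemma kB2 (x y : ℤ) : kap σ θ s((x,y+1),(x-1,y+1)) = if x - 1 < θ 0 then σ else 0 := by
  rw [Sym2.eq_swap, show ((x,y+1) : ℤ×ℤ) = (x-1,y+1) + dvec 0 from by simp [dvec, Prod.ext_iff] <;> omega, kap_eval]
  simp [eparam]

lemma kB3 (x y : ℤ) : kap σ θ s((x-1,y+1),(x-1,y)) = if x + y - 1 < θ 1 then σ else 0 := by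
  rw [Sym2.eq_swap, show ((x-1,y+1) : ℤ×ℤ) = (x-1,y) + dvec 1 from by simp [dvec, Prod.ext_iff] <;> omega, kap_eval]
  simp [eparam]
  exact if_congr (by omega) rfl rfl

lemma kB4 (x y : ℤ) : kap σ θ s((x-1,y),(x,y-1)) = if y - 1 < θ 2 then σ else 0 := by
  rw [Sym2.eq_swap, show ((x-1,y) : ℤ×ℤ) = (x,y-1) + dvec 2 from by simp [dvec, Prod.ext_iff] <;> omega, kap_eval]
  simp [eparam]

lemma kB5 (x y : ℤ) : kap σ θ s((x,y-1),(x+1,y-1)) = if x < θ 0 then σ else 0 := by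
  rw [show ((x+1,y-1) : ℤ×ℤ) = (x,y-1) + dvec 0 from by simp [dvec, Prod.ext_iff] <;> omega, kap_eval]
  simp [eparam]

lemma kB6 (x y : ℤ) : kap σ θ s((x+1,y-1),(x+1,y)) = if x + y < θ 1 then σ else 0 := by
  rw [show ((x+1,y) : ℤ×ℤ) = (x+1,y-1) + dvec 1 from by simp [dvec, Prod.ext_iff] <;> omega, kap_eval]
  simp [eparam]
  try rw [show x + 1 + (y-1) = x + y from by ring]

lemma kap_hexEq (p : ℤ × ℤ) : hexEq (kap σ θ) p := by
  obtain ⟨i, j⟩ := p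
  unfold hexEq
  simp only [Prod.mk_add_mk, Prod.mk_sub_mk, add_zero, sub_zero, ← sub_eq_add_neg,
    sub_neg_eq_add]
  rw [kA1, kA2, kA3, kA4, kA5, kA6, kB1, kB2, kB3, kB4, kB5, kB6]
  ring

end evals


-- helper: sum of identity over Ioc in ℤ
lemma sum_Ioc_id_two (a b : ℤ) (h : a ≤ b) :
    (∑ x ∈ Finset.Ioc a b, x) * 2 = (a + b + 1) * (b - a) := by
  refine Int.le_induction (motive := fun b _ => (∑ x ∈ Finset.Ioc a b, x) * 2 = (a + b + 1) * (b - a))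
    ?_ ?_ b h
  · rw [Finset.Ioc_self]; simp
  · intro b hb ih
    have hins : Finset.Ioc a (b + 1) = insert (b + 1) (Finset.Ioc a b) := by
      ext x; simp only [Finset.mem_Ioc, Finset.mem_insert]; omega
    have hnot : (b + 1) ∉ Finset.Ioc a b := by simp
    rw [hins, Finset.sum_insert hnot]
    linear_combination ih

lemma card_Ioc_int (a b : ℤ) (h : a ≤ b) : ((Finset.Ioc a b).card : ℤ) = b - a := by
  rw [Int.card_Ioc]; omega

noncomputable def baseSet (n : ℤ) (r : Fin 3) : Finset (ℤ × ℤ) :=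
  (hexNodes n).filter (fun p => p + dvec r ∈ hexNodes n)

lemma mem_baseSet0 {n : ℤ} {p : ℤ × ℤ} :
    p ∈ baseSet n 0 ↔ (1 - n ≤ p.1 ∧ p.1 ≤ n - 2 ∧ 1 - n ≤ p.2 ∧ p.2 ≤ n - 1 ∧
      1 - n ≤ p.1 + p.2 ∧ p.1 + p.2 ≤ n - 2) := by
  simp only [baseSet, Finset.mem_filter, mem_hexNodes, dvec, abs_le]
  simp [Prod.ext_iff, Matrix.cons_val_zero]
  omega

-- number of long edges of direction 0 with threshold θ
noncomputable def Ncnt (n θ : ℤ) : ℕ := ((baseSet n 0).filter (fun p => p.1 < θ)).card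

lemma Ncnt_bot (n : ℤ) : Ncnt n (1 - n) = 0 := by
  unfold Ncnt
  rw [Finset.card_eq_zero, Finset.filter_eq_empty_iff]
  intro p hp
  rw [mem_baseSet0] at hp
  omega

lemma Ncnt_mono (n : ℤ) {θ₁ θ₂ : ℤ} (h : θ₁ ≤ θ₂) : Ncnt n θ₁ ≤ Ncnt n θ₂ := by
  apply Finset.card_le_card
  intro p hp
  simp only [Finset.mem_filter] at hp ⊢
  exact ⟨hp.1, lt_of_lt_of_le hp.2 h⟩

lemma fiber_eq (n x : ℤ) (hx1 : 1 - n ≤ x) (hx2 : x ≤ n - 2) :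
    (baseSet n 0).filter (fun p => p.1 = x) =
      ({x} : Finset ℤ) ×ˢ Finset.Icc (max (1-n) (1-n-x)) (min (n-1) (n-2-x)) := by
  ext ⟨a, b⟩
  simp [mem_baseSet0, Finset.mem_Icc]
  omega

lemma fiber_card (n x : ℤ) (hn : 3 ≤ n) (hx1 : 1 - n ≤ x) (hx2 : x ≤ n - 2) :
    (((baseSet n 0).filter (fun p => p.1 = x)).card : ℤ) =
      min (n-1) (n-2-x) - max (1-n) (1-n-x) + 1 := by
  rw [fiber_eq n x hx1 hx2, Finset.card_product, Finset.card_singleton, one_mul, Int.card_Icc]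
  omega

lemma Ncnt_step (n θ : ℤ) (hn : 3 ≤ n) : (Ncnt n (θ+1) : ℤ) ≤ (Ncnt n θ : ℤ) + (2*n - 2) := by
  unfold Ncnt
  have hsub : (baseSet n 0).filter (fun p => p.1 < θ + 1) ⊆
      (baseSet n 0).filter (fun p => p.1 < θ) ∪ (baseSet n 0).filter (fun p => p.1 = θ) := by
    intro p hp
    simp only [Finset.mem_filter, Finset.mem_union] at hp ⊢
    by_cases hc : p.1 < θ
    · exact Or.inl ⟨hp.1, hc⟩
    · exact Or.inr ⟨hp.1, by omega⟩
  have h1 := Finset.card_le_card hsub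
  have h2 := Finset.card_union_le ((baseSet n 0).filter (fun p => p.1 < θ))
      ((baseSet n 0).filter (fun p => p.1 = θ))
  have h3 : (((baseSet n 0).filter (fun p => p.1 = θ)).card : ℤ) ≤ 2*n - 2 := by
    by_cases hθ : 1 - n ≤ θ ∧ θ ≤ n - 2
    · rw [fiber_card n θ hn hθ.1 hθ.2]; omega
    · have : (baseSet n 0).filter (fun p => p.1 = θ) = ∅ := by
        rw [Finset.filter_eq_empty_iff]
        intro p hp
        rw [mem_baseSet0] at hp
        show ¬ p.1 = θ
        omega
      rw [this]; simp; omega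
  push_cast
  omega

lemma sum_Ioc_split (f : ℤ → ℤ) {a b c : ℤ} (hab : a ≤ b) (hbc : b ≤ c) :
    ∑ x ∈ Finset.Ioc a c, f x = ∑ x ∈ Finset.Ioc a b, f x + ∑ x ∈ Finset.Ioc b c, f x := by
  rw [← Finset.sum_union]
  · congr 1
    ext x
    simp only [Finset.mem_Ioc, Finset.mem_union]
    omega
  · rw [Finset.disjoint_left]
    intro x hx hx'
    simp only [Finset.mem_Ioc] at hx hx'
    omega

lemma card_baseSet0 (n : ℤ) (hn : 3 ≤ n) :
    ((baseSet n 0).card : ℤ) = 3 * n^2 - 5*n + 2 := by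
  have hfib := Finset.card_eq_sum_card_fiberwise
    (f := fun p : ℤ × ℤ => p.1) (s := baseSet n 0) (t := Finset.Icc (1-n) (n-2))
    (fun p hp => by rw [Finset.mem_coe, mem_baseSet0] at hp; show p.1 ∈ Finset.Icc (1-n) (n-2); rw [Finset.mem_Icc]; omega)
  beta_reduce at hfib
  rw [hfib]
  push_cast
  have hcongr : ∀ x ∈ Finset.Icc (1-n) (n-2),
      ((((baseSet n 0).filter (fun p => p.1 = x)).card : ℤ)) =
        min (n-1) (n-2-x) - max (1-n) (1-n-x) + 1 := by
    intro x hx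
    rw [Finset.mem_Icc] at hx
    exact fiber_card n x hn hx.1 hx.2
  rw [Finset.sum_congr rfl hcongr]
  have hsplit : Finset.Icc (1-n) (n-2) = Finset.Ioc (-n) (n-2) := by
    ext x; simp [Finset.mem_Icc, Finset.mem_Ioc]; omega
  rw [hsplit]
  rw [sum_Ioc_split (fun x : ℤ => min (n-1) (n-2-x) - max (1-n) (1-n-x) + 1)
    (by omega : (-n : ℤ) ≤ -1) (by omega : (-1 : ℤ) ≤ n-2)]
  have e1 : ∀ x ∈ Finset.Ioc (-n) (-1 : ℤ),
      min (n-1) (n-2-x) - max (1-n) (1-n-x) + 1 = (2*n-1) + x := by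
    intro x hx; rw [Finset.mem_Ioc] at hx; omega
  have e2 : ∀ x ∈ Finset.Ioc (-1 : ℤ) (n-2),
      min (n-1) (n-2-x) - max (1-n) (1-n-x) + 1 = (2*n-2) - x := by
    intro x hx; rw [Finset.mem_Ioc] at hx; omega
  rw [Finset.sum_congr rfl e1, Finset.sum_congr rfl e2]
  have hc1 : ((Finset.Ioc (-n) (-1 : ℤ)).card : ℤ) = n - 1 := by
    rw [card_Ioc_int _ _ (by omega : (-n : ℤ) ≤ -1)]; ring
  have hc2 : ((Finset.Ioc (-1 : ℤ) (n-2)).card : ℤ) = n - 1 := by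
    rw [card_Ioc_int _ _ (by omega : (-1 : ℤ) ≤ n - 2)]; ring
  have hs1 := sum_Ioc_id_two (-n) (-1) (by omega)
  have hs2 := sum_Ioc_id_two (-1) (n-2) (by omega)
  have hA : (∑ x ∈ Finset.Ioc (-n) (-1 : ℤ), (2*n-1+x)) * 2 = (n-1)*(3*n-2) := by
    rw [Finset.sum_add_distrib, Finset.sum_const, nsmul_eq_mul, hc1]
    linear_combination hs1
  have hB : (∑ x ∈ Finset.Ioc (-1 : ℤ) (n-2), (2*n-2-x)) * 2 = (n-1)*(3*n-2) := by
    rw [Finset.sum_sub_distrib, Finset.sum_const, nsmul_eq_mul, hc2]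
    linear_combination -hs2
  linarith [hA, hB]

lemma Ncnt_top (n : ℤ) (hn : 3 ≤ n) : (Ncnt n (n-1) : ℤ) = 3*n^2 - 5*n + 2 := by
  unfold Ncnt
  rw [Finset.filter_true_of_mem (fun p hp => by
    rw [mem_baseSet0] at hp; show p.1 < n - 1; omega)]
  exact card_baseSet0 n hn

lemma mem_baseSet1 {n : ℤ} {p : ℤ × ℤ} :
    p ∈ baseSet n 1 ↔ (1 - n ≤ p.1 ∧ p.1 ≤ n - 1 ∧ 1 - n ≤ p.2 ∧ p.2 ≤ n - 2 ∧
      1 - n ≤ p.1 + p.2 ∧ p.1 + p.2 ≤ n - 2) := by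
  simp only [baseSet, Finset.mem_filter, mem_hexNodes, dvec, abs_le]
  simp
  omega

lemma mem_baseSet2 {n : ℤ} {p : ℤ × ℤ} :
    p ∈ baseSet n 2 ↔ (2 - n ≤ p.1 ∧ p.1 ≤ n - 1 ∧ 1 - n ≤ p.2 ∧ p.2 ≤ n - 2 ∧
      1 - n ≤ p.1 + p.2 ∧ p.1 + p.2 ≤ n - 1) := by
  simp only [baseSet, Finset.mem_filter, mem_hexNodes, dvec, abs_le]
  simp
  omega

lemma fin3_cases (r : Fin 3) : r = 0 ∨ r = 1 ∨ r = 2 := by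
  rcases r with ⟨v, hv⟩
  interval_cases v
  · exact Or.inl rfl
  · exact Or.inr (Or.inl rfl)
  · exact Or.inr (Or.inr rfl)

lemma card_param_eq (n : ℤ) (θ : ℤ) (r : Fin 3) :
    ((baseSet n r).filter (fun p => eparam r p < θ)).card = Ncnt n θ := by
  unfold Ncnt
  rcases fin3_cases r with rfl | rfl | rfl
  · apply Finset.card_nbij (i := fun p => p)
    · intro a ha
      simp only [Finset.mem_coe, Finset.mem_filter] at ha ⊢
      simp only [Finset.mem_coe, Finset.mem_filter, mem_baseSet0, eparam] at ha ⊢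
      simp only [Matrix.cons_val_zero] at ha
      exact ha
    · intro a ha b hb hab; exact hab
    · intro a ha
      simp only [Finset.mem_coe, Finset.mem_filter, mem_baseSet0, eparam] at ha
      refine ⟨a, ?_, rfl⟩
      simp only [Finset.mem_coe, Finset.mem_filter]
      simp only [Finset.mem_coe, Finset.mem_filter, mem_baseSet0, eparam,
        Matrix.cons_val_zero]
      exact ha
  · apply Finset.card_nbij (i := fun p => ((p.1 + p.2, -p.1) : ℤ × ℤ))
    · intro a ha
      simp only [Finset.mem_coe, Finset.mem_filter] at ha ⊢
      simp only [Finset.mem_coe, Finset.mem_filter, mem_baseSet1, mem_baseSet0, eparam] at ha ⊢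
      simp only [Matrix.cons_val_one, Matrix.head_cons, Matrix.cons_val_zero] at ha
      omega
    · intro a _ b _ hab
      simp only [Prod.ext_iff] at hab
      ext <;> omega
    · intro q hq
      simp only [Finset.mem_coe, Finset.mem_filter, mem_baseSet0] at hq
      refine ⟨((-q.2, q.1 + q.2) : ℤ × ℤ), ?_, ?_⟩
      · simp only [Finset.mem_coe, Finset.mem_filter]
        simp only [Finset.mem_coe, Finset.mem_filter, mem_baseSet1, eparam,
          Matrix.cons_val_one, Matrix.head_cons, Matrix.cons_val_zero]
        omega
      · ext <;> simp <;> omega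
  · apply Finset.card_nbij (i := fun p => ((p.2, -p.1 - p.2) : ℤ × ℤ))
    · intro a ha
      simp only [Finset.mem_coe, Finset.mem_filter] at ha ⊢
      simp only [Finset.mem_coe, Finset.mem_filter, mem_baseSet2, mem_baseSet0, eparam] at ha ⊢
      simp only [Matrix.cons_val_two, Matrix.tail_cons, Matrix.head_cons] at ha
      omega
    · intro a _ b _ hab
      simp only [Prod.ext_iff] at hab
      ext <;> omega
    · intro q hq
      simp only [Finset.mem_coe, Finset.mem_filter, mem_baseSet0] at hq
      refine ⟨((-q.1 - q.2, q.1) : ℤ × ℤ), ?_, ?_⟩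
      · simp only [Finset.mem_coe, Finset.mem_filter]
        simp only [Finset.mem_coe, Finset.mem_filter, mem_baseSet2, eparam,
          Matrix.cons_val_two, Matrix.tail_cons, Matrix.head_cons]
        omega
      · ext <;> simp <;> omega

lemma dvec_mem_hexDirs (r : Fin 3) : dvec r ∈ hexDirs := by
  fin_cases r <;> simp [dvec, hexDirs]

lemma kap_value (σ : ℝ) (θ : Fin 3 → ℤ) (e : Sym2 (ℤ × ℤ)) : kap σ θ e = 0 ∨ kap σ θ e = σ := by
  unfold kap
  split
  · exact Or.inr rfl
  · exact Or.inl rfl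

lemma edge_count (n : ℤ) (σ : ℝ) (hσ : 0 < σ) (θ : Fin 3 → ℤ) (r : Fin 3) :
    ((hexEdges n).filter (fun e => parallelTo r e ∧ kap σ θ e = σ)).card
      = ((baseSet n r).filter (fun p => eparam r p < θ r)).card := by
  symm
  apply Finset.card_bij (i := fun p (_ : p ∈ _) => s(p, p + dvec r))
  · intro a ha
    simp only [Finset.mem_filter] at ha ⊢
    obtain ⟨hab, hpar⟩ := ha
    simp only [baseSet, Finset.mem_filter] at hab
    refine ⟨?_, ⟨a, rfl⟩, ?_⟩
    · unfold hexEdges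
      apply Finset.mem_image.2
      exact ⟨(a, dvec r), by
        simp only [Finset.mem_filter, Finset.mem_product]
        exact ⟨⟨hab.1, dvec_mem_hexDirs r⟩, hab.2⟩, rfl⟩
    · rw [kap_eval, if_pos hpar]
  · intro a ha b hb hab
    rw [Sym2.eq_iff] at hab
    rcases hab with ⟨h1, _⟩ | ⟨h1, h2⟩
    · exact h1
    · exfalso
      apply dvec_add_dvec_ne r r
      have h3 : b + (dvec r + dvec r) = b + 0 := by
        rw [add_zero, ← add_assoc, ← h1, h2]
      exact add_left_cancel h3
  · intro e he
    simp only [Finset.mem_filter] at he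
    obtain ⟨hee, ⟨q, rfl⟩, hkap⟩ := he
    have hq : q ∈ baseSet n r := by
      unfold hexEdges at hee
      obtain ⟨pd, hpd, hpe⟩ := Finset.mem_image.1 hee
      simp only [Finset.mem_filter, Finset.mem_product] at hpd
      rw [Sym2.eq_iff] at hpe
      simp only [baseSet, Finset.mem_filter]
      rcases hpe with ⟨h1, h2⟩ | ⟨h1, h2⟩
      · rw [← h2, ← h1]; exact ⟨hpd.1.1, hpd.2⟩
      · rw [← h1, ← h2]; exact ⟨hpd.2, hpd.1.1⟩
    have hpar : eparam r q < θ r := by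
      rw [kap_eval] at hkap
      by_contra hcon
      rw [if_neg hcon] at hkap
      exact hσ.ne hkap
    exact ⟨q, Finset.mem_filter.2 ⟨hq, hpar⟩, rfl⟩

lemma exists_theta (n : ℤ) (hn : 3 ≤ n) (a : ℝ) (ha0 : 0 ≤ a) (ha1 : a ≤ 1) :
    ∃ θ : ℤ, |a * (3*(n:ℝ)^2 - 5*n + 2) - (Ncnt n θ : ℝ)| < 2*(n:ℝ) - 2 := by
  have hn' : (3:ℝ) ≤ (n:ℝ) := by exact_mod_cast hn
  set T : ℝ := 3*(n:ℝ)^2 - 5*n + 2 with hTdef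
  have hT : (0:ℝ) < T := by nlinarith
  set F := (Finset.Icc (1-n) (n-1)).filter (fun θ => (Ncnt n θ : ℝ) ≤ a * T) with hF
  have hne : (1-n) ∈ F := by
    rw [hF, Finset.mem_filter, Finset.mem_Icc]
    refine ⟨⟨le_refl _, by omega⟩, ?_⟩
    rw [Ncnt_bot]
    simpa using mul_nonneg ha0 hT.le
  have hFne : F.Nonempty := ⟨1-n, hne⟩
  set θ := F.max' hFne with hθdef
  have hmem : θ ∈ F := Finset.max'_mem F hFne
  rw [hF, Finset.mem_filter, Finset.mem_Icc] at hmem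
  obtain ⟨⟨hθ1, hθ2⟩, hθle⟩ := hmem
  by_cases hend : θ = n - 1
  · refine ⟨θ, ?_⟩
    have htop : ((Ncnt n θ : ℝ)) = T := by
      rw [hend, hTdef]
      exact_mod_cast Ncnt_top n hn
    have hup : a * T ≤ T := by nlinarith
    rw [htop]
    have : a * T - T ≤ 0 := by linarith
    rw [abs_of_nonpos (by linarith [hθle, htop])]
    linarith [hθle, htop]
  · refine ⟨θ, ?_⟩
    have hmem2 : θ + 1 ∉ F := by
      intro hc
      have := Finset.le_max' F (θ+1) hc
      omega
    have hgt : a * T < (Ncnt n (θ+1) : ℝ) := by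
      by_contra hcon
      push_neg at hcon
      exact hmem2 (by
        rw [hF, Finset.mem_filter, Finset.mem_Icc]
        exact ⟨⟨by omega, by omega⟩, hcon⟩)
    have hstep := Ncnt_step n θ hn
    have hstepR : (Ncnt n (θ+1) : ℝ) ≤ (Ncnt n θ : ℝ) + (2*(n:ℝ) - 2) := by
      exact_mod_cast hstep
    rw [abs_lt]
    constructor
    · linarith
    · linarith


/-- for every `n ≥ 3` and target concentrations `α ∈ [0,1]³` there is a still
state of the hexagonal array of side `n` whose concentration of long edges in each lattice
direction `r` — the number of long edges parallel to direction `r` divided by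
`3n² - 5n + 2` (the number of edges parallel to direction `r`) — is within `1/n` of `α r`. -/
theorem still_state_with_prescribed_concentrations (σ : ℝ) (hσ : 0 < σ)
    (n : ℤ) (hn : 3 ≤ n) (α : Fin 3 → ℝ) (hα : ∀ r, α r ∈ Set.Icc (0 : ℝ) 1) :
    ∃ κ : Sym2 (ℤ × ℤ) → ℝ, StillState n σ κ ∧
      ∀ r : Fin 3,
        |α r - (((hexEdges n).filter (fun e => parallelTo r e ∧ κ e = σ)).card : ℝ) /
            (3 * (n : ℝ) ^ 2 - 5 * n + 2)| < 1 / (n : ℝ) := by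
  have hn' : (3:ℝ) ≤ (n:ℝ) := by exact_mod_cast hn
  have hT : (0:ℝ) < 3 * (n : ℝ) ^ 2 - 5 * n + 2 := by nlinarith
  have hn0 : (0:ℝ) < (n:ℝ) := by linarith
  choose θ hθ using fun r : Fin 3 => exists_theta n hn (α r) (hα r).1 (hα r).2
  refine ⟨kap σ θ, ⟨fun e _ => kap_value σ θ e, fun p _ => kap_hexEq σ θ p⟩, fun r => ?_⟩
  rw [edge_count n σ hσ θ r, card_param_eq n (θ r) r]
  have h1 := hθ r
  have key : α r - (Ncnt n (θ r) : ℝ) / (3 * (n : ℝ) ^ 2 - 5 * n + 2) =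
      (α r * (3 * (n : ℝ) ^ 2 - 5 * n + 2) - (Ncnt n (θ r) : ℝ)) /
        (3 * (n : ℝ) ^ 2 - 5 * n + 2) := by
    rw [sub_div, mul_div_cancel_right₀ _ hT.ne']
  rw [key, abs_div, abs_of_pos hT, div_lt_div_iff₀ hT hn0]
  have habs := abs_nonneg (α r * (3 * (n : ℝ) ^ 2 - 5 * n + 2) - (Ncnt n (θ r) : ℝ))
  nlinarith [h1, hn', habs, hn0]
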